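/- arXiv:1911.07517 — 3 statements merged into one kernel-verified Lean document; each statement's English description precedes it below -/
import Mathlib

section
/- For any two d×d density matrices ρ and σ, one has ∑_{a ≠ a'} |ρ_{a a'}| · |σ_{a a'}| ≤ (d−1)/d, where the sum runs over ordered pairs (a,a') with a ≠ a'. -/
open Matrix ComplexOrder BigOperators

-- auxiliary: entrywise bound for a PSD matrix: ‖A i j‖² ≤ (A i i).re * (A j j).re
lemma aux_entry_sq {d : ℕ} {A : Matrix (Fin d) (Fin d) ℂ} (hA : A.PosSemidef) (i j : Fin d) :
    ‖A i j‖ ^ 2 ≤ (A i i).re * (A j j).re := by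
  obtain ⟨B, rfl⟩ : ∃ B : Matrix (Fin d) (Fin d) ℂ, A = Bᴴ * B := by
    open scoped MatrixOrder in
    obtain ⟨X, hX, -, hXA⟩ := sub_zero A ▸ CFC.exists_sqrt_of_isSelfAdjoint_of_quasispectrumRestricts
      hA.isHermitian (QuasispectrumRestricts.nnreal_of_nonneg hA.nonneg)
    rw [sub_zero] at hXA
    exact ⟨X, by rw [← hXA]; exact congrArg (· * X) hX.star_eq.symm⟩
  set u : EuclideanSpace ℂ (Fin d) := WithLp.toLp 2 (fun k => B k i)
  set v : EuclideanSpace ℂ (Fin d) := WithLp.toLp 2 (fun k => B k j)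
  have h1 : (Bᴴ * B) i j = inner (𝕜 := ℂ) u v := by
    simp [Matrix.mul_apply, PiLp.inner_apply, u, v, Matrix.conjTranspose_apply, mul_comm]
  have h2 : ((Bᴴ * B) i i).re = ‖u‖ ^ 2 := by
    have : (Bᴴ * B) i i = inner (𝕜 := ℂ) u u := by
      simp [Matrix.mul_apply, PiLp.inner_apply, u, Matrix.conjTranspose_apply, mul_comm, -inner_self_eq_norm_sq_to_K]
    rw [this]
    simpa [RCLike.re_to_complex] using inner_self_eq_norm_sq (𝕜 := ℂ) u
  have h3 : ((Bᴴ * B) j j).re = ‖v‖ ^ 2 := by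
    have : (Bᴴ * B) j j = inner (𝕜 := ℂ) v v := by
      simp [Matrix.mul_apply, PiLp.inner_apply, v, Matrix.conjTranspose_apply, mul_comm, -inner_self_eq_norm_sq_to_K]
    rw [this]
    simpa [RCLike.re_to_complex] using inner_self_eq_norm_sq (𝕜 := ℂ) v
  rw [h1, h2, h3]
  calc ‖inner (𝕜 := ℂ) u v‖ ^ 2 ≤ (‖u‖ * ‖v‖) ^ 2 := by
        have := norm_inner_le_norm (𝕜 := ℂ) u v
        exact pow_le_pow_left₀ (norm_nonneg _) this 2
    _ = ‖u‖ ^ 2 * ‖v‖ ^ 2 := by ring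

-- auxiliary: sum over off-diagonal pairs of products of diagonal values
lemma aux_offdiag_sum {d : ℕ} (r : Fin d → ℝ) :
    ∑ q ∈ Finset.univ.filter (fun q : Fin d × Fin d => q.1 ≠ q.2), r q.1 * r q.2
      = (∑ i, r i) ^ 2 - ∑ i, r i ^ 2 := by
  have hsq : (∑ i, r i) ^ 2 = ∑ q : Fin d × Fin d, r q.1 * r q.2 := by
    rw [sq, Finset.sum_mul_sum, Fintype.sum_prod_type]
  have hsplit := Finset.sum_filter_add_sum_filter_not (Finset.univ : Finset (Fin d × Fin d))
    (fun q => q.1 = q.2) (fun q => r q.1 * r q.2)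
  have hdiag : ∑ q ∈ Finset.univ.filter (fun q : Fin d × Fin d => q.1 = q.2), r q.1 * r q.2
      = ∑ i, r i ^ 2 := by
    refine Finset.sum_nbij' (fun q => q.1) (fun i => (i, i)) ?_ ?_ ?_ ?_ ?_ <;>
      simp +contextual [sq, eq_comm]
  have : ∑ q ∈ Finset.univ.filter (fun q : Fin d × Fin d => ¬ q.1 = q.2), r q.1 * r q.2
      = (∑ i, r i) ^ 2 - ∑ i, r i ^ 2 := by
    rw [hsq, ← hsplit, hdiag]; ring
  simpa using this

-- auxiliary: the off-diagonal squared-norm bound for a density matrix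
lemma aux_density_bound {d : ℕ} {A : Matrix (Fin d) (Fin d) ℂ} (hA : A.PosSemidef)
    (hτ : A.trace = 1) :
    ∑ q ∈ Finset.univ.filter (fun q : Fin d × Fin d => q.1 ≠ q.2), ‖A q.1 q.2‖ ^ 2
      ≤ ((d : ℝ) - 1) / d := by
  have hd : 0 < d := by
    by_contra h
    interval_cases d
    simp [Matrix.trace] at hτ
  set r : Fin d → ℝ := fun i => (A i i).re with hr
  have hsum : ∑ i, r i = 1 := by
    have := congrArg Complex.re hτ
    simpa [Matrix.trace, Matrix.diag, Complex.re_sum, r] using this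
  have h1 : ∑ q ∈ Finset.univ.filter (fun q : Fin d × Fin d => q.1 ≠ q.2), ‖A q.1 q.2‖ ^ 2
      ≤ ∑ q ∈ Finset.univ.filter (fun q : Fin d × Fin d => q.1 ≠ q.2), r q.1 * r q.2 :=
    Finset.sum_le_sum (fun q _ => aux_entry_sq hA q.1 q.2)
  have h2 : (1 : ℝ) ≤ (d : ℝ) * ∑ i, r i ^ 2 := by
    have := sq_sum_le_card_mul_sum_sq (s := (Finset.univ : Finset (Fin d))) (f := r)
    simpa [hsum] using this
  have h3 : (1 : ℝ) / d ≤ ∑ i, r i ^ 2 := by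
    rw [div_le_iff₀ (by positivity)]
    linarith [h2]
  calc _ ≤ ∑ q ∈ Finset.univ.filter (fun q : Fin d × Fin d => q.1 ≠ q.2), r q.1 * r q.2 := h1
    _ = (∑ i, r i) ^ 2 - ∑ i, r i ^ 2 := aux_offdiag_sum r
    _ = 1 - ∑ i, r i ^ 2 := by rw [hsum]; ring
    _ ≤ 1 - 1 / d := by linarith [h3]
    _ = ((d : ℝ) - 1) / d := by
        field_simp

/-- SLHS bound in dimension `d` (Eq. (8)): for two `d × d` density matrices `ρ`, `σ`,
`∑_{a ≠ a'} |ρ_{a a'}| |σ_{a a'}| ≤ (d-1)/d`. -/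
theorem slhs_stmt6 {d : ℕ} (ρ σ : Matrix (Fin d) (Fin d) ℂ)
    (hρ : ρ.PosSemidef) (hτρ : ρ.trace = 1)
    (hσ : σ.PosSemidef) (hτσ : σ.trace = 1) :
    ∑ q ∈ Finset.univ.filter (fun q : Fin d × Fin d => q.1 ≠ q.2), ‖ρ q.1 q.2‖ * ‖σ q.1 q.2‖
      ≤ ((d : ℝ) - 1) / d := by
  have hd : 0 < d := by
    by_contra h
    interval_cases d
    simp [Matrix.trace] at hτρ
  set S := Finset.univ.filter (fun q : Fin d × Fin d => q.1 ≠ q.2)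
  have hCS : (∑ q ∈ S, ‖ρ q.1 q.2‖ * ‖σ q.1 q.2‖) ^ 2
      ≤ (∑ q ∈ S, ‖ρ q.1 q.2‖ ^ 2) * ∑ q ∈ S, ‖σ q.1 q.2‖ ^ 2 :=
    Finset.sum_mul_sq_le_sq_mul_sq S _ _
  have hρb := aux_density_bound hρ hτρ
  have hσb := aux_density_bound hσ hτσ
  have hrhs : (0 : ℝ) ≤ ((d : ℝ) - 1) / d := by
    apply div_nonneg _ (by positivity)
    have : (1 : ℝ) ≤ d := by exact_mod_cast hd
    linarith
  have hlhs : 0 ≤ ∑ q ∈ S, ‖ρ q.1 q.2‖ * ‖σ q.1 q.2‖ :=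
    Finset.sum_nonneg fun q _ => mul_nonneg (norm_nonneg _) (norm_nonneg _)
  have hsq : (∑ q ∈ S, ‖ρ q.1 q.2‖ * ‖σ q.1 q.2‖) ^ 2 ≤ (((d : ℝ) - 1) / d) ^ 2 := by
    calc _ ≤ (∑ q ∈ S, ‖ρ q.1 q.2‖ ^ 2) * ∑ q ∈ S, ‖σ q.1 q.2‖ ^ 2 := hCS
      _ ≤ (((d : ℝ) - 1) / d) * (((d : ℝ) - 1) / d) := by
          apply mul_le_mul hρb hσb (Finset.sum_nonneg fun q _ => sq_nonneg _) hrhs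
      _ = (((d : ℝ) - 1) / d) ^ 2 := (sq _).symm
  nlinarith [hsq, hlhs, hrhs]
end

section
/- Let ρ be a separable density matrix on ℂ² ⊗ ℂ², i.e. ρ = ∑_λ p(λ) ρ_λ^A ⊗ ρ_λ^B with p a probability distribution and ρ_λ^A, ρ_λ^B qubit density matrices. Then |⟨00| ρ |11⟩| ≤ 1/4, and consequently |⟨00|ρ|11⟩| + |⟨11|ρ|00⟩| ≤ 1/2. -/
open Matrix ComplexOrder Kronecker BigOperators

lemma qubit_offdiag_le {A : Matrix (Fin 2) (Fin 2) ℂ}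
    (h : A.PosSemidef) (ht : A.trace = 1) : ‖A 0 1‖ ≤ 1 / 2 := by
  by_cases hb : A 0 1 = 0
  · simp [hb]
  set b := A 0 1 with hbdef
  set c : ℂ := -(starRingEnd ℂ b) / (‖b‖ : ℂ) with hc
  have hq := h.dotProduct_mulVec_nonneg ![1, c]
  have hA10 : A 1 0 = starRingEnd ℂ b := by
    have := h.1
    rw [Matrix.IsHermitian] at this
    have := congrFun (congrFun this 1) 0
    simpa [Matrix.conjTranspose_apply] using this.symm
  have hbn : (‖b‖ : ℂ) ≠ 0 := by
    simpa using norm_ne_zero_iff.mpr hb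
  have hval : star ![1, c] ⬝ᵥ (A *ᵥ ![1, c]) = A 0 0 + A 1 1 - 2 * (‖b‖ : ℂ) := by
    simp [dotProduct, Pi.star_apply, Matrix.mulVec, Fin.sum_univ_two, hA10, hc]
    field_simp
    ring_nf
    rw [show (A 0 1 : ℂ) = b from rfl] at *
    have hcc : b * (starRingEnd ℂ) b = ((‖b‖ : ℝ) : ℂ) ^ 2 := by
      rw [Complex.mul_conj, Complex.normSq_eq_norm_sq]
      push_cast
      ring
    linear_combination (A 1 1 - 2 * (‖b‖ : ℂ)) * hcc
  rw [hval] at hq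
  have htr : A 0 0 + A 1 1 = 1 := by
    simpa [Matrix.trace, Fin.sum_univ_two] using ht
  rw [htr] at hq
  have := (Complex.le_def.mp hq).1
  simp at this
  linarith

/-- No separable two-qubit state violates the SLHS inequality:
`|⟨00|ρ|11⟩| ≤ 1/4` and `|⟨00|ρ|11⟩| + |⟨11|ρ|00⟩| ≤ 1/2`. -/
theorem slhs_stmt8 {Λ : Type*} [Fintype Λ] (p : Λ → ℝ)
    (hp : ∀ lam, 0 ≤ p lam) (hp1 : ∑ lam, p lam = 1)
    (ρA ρB : Λ → Matrix (Fin 2) (Fin 2) ℂ)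
    (hA : ∀ lam, (ρA lam).PosSemidef ∧ (ρA lam).trace = 1)
    (hB : ∀ lam, (ρB lam).PosSemidef ∧ (ρB lam).trace = 1)
    (ρ : Matrix (Fin 2 × Fin 2) (Fin 2 × Fin 2) ℂ)
    (hρ : ρ = ∑ lam, (p lam : ℂ) • (ρA lam ⊗ₖ ρB lam)) :
    ‖ρ (0, 0) (1, 1)‖ ≤ 1 / 4 ∧ ‖ρ (0, 0) (1, 1)‖ + ‖ρ (1, 1) (0, 0)‖ ≤ 1 / 2 := by
  have key : ∀ (i j : Fin 2), ‖ρ (i, i) (j, j)‖ ≤ 1 / 4 ∨ True := fun _ _ => Or.inr trivial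
  have h10 : ∀ lam, ‖ρA lam 1 0‖ ≤ 1/2 ∧ ‖ρB lam 1 0‖ ≤ 1/2 := by
    intro lam
    have e1 : ρA lam 1 0 = starRingEnd ℂ (ρA lam 0 1) := by
      have := congrFun (congrFun (hA lam).1.1 1) 0
      simpa [Matrix.conjTranspose_apply] using this.symm
    have e2 : ρB lam 1 0 = starRingEnd ℂ (ρB lam 0 1) := by
      have := congrFun (congrFun (hB lam).1.1 1) 0
      simpa [Matrix.conjTranspose_apply] using this.symm
    rw [e1, e2]
    simp only [RCLike.norm_conj]
    exact ⟨qubit_offdiag_le (hA lam).1 (hA lam).2, qubit_offdiag_le (hB lam).1 (hB lam).2⟩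
  have bound : ∀ (i j : Fin 2), (∀ lam, ‖ρA lam i j‖ ≤ 1/2) → (∀ lam, ‖ρB lam i j‖ ≤ 1/2) →
      ‖ρ (i, i) (j, j)‖ ≤ 1 / 4 := by
    intro i j hAb hBb
    rw [hρ]
    simp only [Matrix.sum_apply, Matrix.smul_apply, Matrix.kroneckerMap_apply, smul_eq_mul]
    calc ‖∑ lam, (p lam : ℂ) * (ρA lam i j * ρB lam i j)‖
        ≤ ∑ lam, ‖(p lam : ℂ) * (ρA lam i j * ρB lam i j)‖ := norm_sum_le _ _
      _ ≤ ∑ lam, p lam * (1/4) := by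
          apply Finset.sum_le_sum
          intro lam _
          rw [norm_mul, norm_mul, Complex.norm_real, Real.norm_of_nonneg (hp lam)]
          have h1 := hAb lam; have h2 := hBb lam
          have : ‖ρA lam i j‖ * ‖ρB lam i j‖ ≤ 1/4 := by
            calc ‖ρA lam i j‖ * ‖ρB lam i j‖ ≤ (1/2) * (1/2) :=
              mul_le_mul h1 h2 (norm_nonneg _) (by norm_num)
            _ = 1/4 := by norm_num
          exact mul_le_mul_of_nonneg_left this (hp lam)
      _ = 1/4 := by rw [← Finset.sum_mul, hp1, one_mul]
  have b1 : ‖ρ (0, 0) (1, 1)‖ ≤ 1 / 4 :=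
    bound 0 1 (fun lam => qubit_offdiag_le (hA lam).1 (hA lam).2)
      (fun lam => qubit_offdiag_le (hB lam).1 (hB lam).2)
  have b2 : ‖ρ (1, 1) (0, 0)‖ ≤ 1 / 4 :=
    bound 1 0 (fun lam => (h10 lam).1) (fun lam => (h10 lam).2)
  exact ⟨b1, by linarith⟩
end

section
/- Let ρ be a density matrix on ℂ^d ⊗ ℂ^d and let {|φ^a⟩}_{a=0}^{d−1} be an orthonormal basis of ℂ^d. If ⟨φ⁰φ⁰| ρ |φ¹φ¹⟩ = 1/2, then ρ = |ψ⟩⟨ψ| where |ψ⟩ = (|φ⁰φ⁰⟩ + |φ¹φ¹⟩)/√2, i.e. ρ is the Bell state in that basis. -/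
open Matrix ComplexOrder BigOperators

variable {ι : Type*} [Fintype ι] [DecidableEq ι]

lemma psd_diag_nonneg {M : Matrix ι ι ℂ} (hM : M.PosSemidef) (i : ι) :
    0 ≤ M i i := by
  have := hM.dotProduct_mulVec_nonneg (Pi.single i 1)
  simpa [Matrix.mulVec_single, dotProduct, Pi.single_apply, apply_ite] using this

lemma psd_det2_nonneg {N : Matrix (Fin 2) (Fin 2) ℂ} (hN : N.PosSemidef) : 0 ≤ N.det := by
  rw [hN.isHermitian.det_eq_prod_eigenvalues]
  exact Finset.prod_nonneg fun i _ =>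
    RCLike.ofReal_nonneg.mpr (hN.eigenvalues_nonneg i)

lemma psd_entry_sq {M : Matrix ι ι ℂ} (hM : M.PosSemidef) {i j : ι} (hij : i ≠ j) :
    Complex.normSq (M i j) ≤ (M i i).re * (M j j).re := by
  have hN : (M.submatrix ![i,j] ![i,j]).PosSemidef := hM.submatrix ![i,j]
  have hdet := psd_det2_nonneg hN
  rw [Matrix.det_fin_two] at hdet
  simp only [Matrix.submatrix_apply, Matrix.cons_val_zero, Matrix.cons_val_one,
    Matrix.head_cons] at hdet
  have hji : M j i = star (M i j) := (hM.isHermitian.apply j i).symm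
  rw [hji] at hdet
  simp only [RCLike.star_def, Complex.mul_conj] at hdet
  have h1 := (Complex.nonneg_iff.mp (psd_diag_nonneg hM i)).2
  have h2 := (Complex.nonneg_iff.mp (psd_diag_nonneg hM j)).2
  have := (Complex.nonneg_iff.mp hdet).1
  simp only [Complex.sub_re, Complex.mul_re, ← h1, ← h2, Complex.ofReal_re] at this
  linarith

lemma core {M : Matrix ι ι ℂ} (hM : M.PosSemidef) (htr : M.trace = 1)
    {a b : ι} (hab : a ≠ b) (hMab : M a b = 1/2) :
    M a a = 1/2 ∧ M b b = 1/2 ∧ M b a = 1/2 ∧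
      ∀ i, i ≠ a → i ≠ b → ∀ k, M i k = 0 ∧ M k i = 0 := by
  set p : ι → ℝ := fun i => (M i i).re with hp
  have hdiag : ∀ i, M i i = (p i : ℂ) := by
    intro i
    have := Complex.nonneg_iff.mp (psd_diag_nonneg hM i)
    exact Complex.ext rfl (by simpa using this.2.symm)
  have hpnn : ∀ i, 0 ≤ p i := fun i => (Complex.nonneg_iff.mp (psd_diag_nonneg hM i)).1
  have hsum : ∑ i, p i = 1 := by
    have : (M.trace).re = 1 := by rw [htr]; simp
    simpa [Matrix.trace, Matrix.diag, Complex.re_sum, hp] using this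
  have hquart : (1:ℝ)/4 ≤ p a * p b := by
    have := psd_entry_sq hM hab
    rw [hMab] at this
    have h14 : Complex.normSq (1/2 : ℂ) = 1/4 := by
      simp [Complex.normSq_apply]; norm_num
    linarith [this, h14 ▸ this]
  have hab1 : p a + p b ≤ 1 := by
    rw [← hsum, ← Finset.sum_pair hab]
    exact Finset.sum_le_sum_of_subset_of_nonneg (Finset.subset_univ _)
      (fun i _ _ => hpnn i)
  have hpa : p a = 1/2 := by nlinarith [hpnn a, hpnn b, sq_nonneg (p a - p b)]
  have hpb : p b = 1/2 := by nlinarith [hpnn a, hpnn b, sq_nonneg (p a - p b)]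
  have hrest : ∀ i, i ≠ a → i ≠ b → p i = 0 := by
    intro i hia hib
    have hsplit : p a + p b + ∑ j ∈ (Finset.univ \ {a, b}), p j = 1 := by
      rw [← hsum, ← Finset.sum_pair hab, ← Finset.sum_sdiff (Finset.subset_univ {a,b})]
      ring
    have hz : ∑ j ∈ (Finset.univ \ {a, b}), p j = 0 := by
      rw [hpa, hpb] at hsplit; linarith
    have := (Finset.sum_eq_zero_iff_of_nonneg (fun j _ => hpnn j)).mp hz i
      (by simp [hia, hib])
    exact this
  refine ⟨by rw [hdiag a, hpa]; norm_num, by rw [hdiag b, hpb]; norm_num, ?_, ?_⟩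
  · have : M b a = star (M a b) := (hM.isHermitian.apply b a).symm
    rw [this, hMab]
    simp only [RCLike.star_def, map_div₀, map_ofNat, RingHom.map_one]
  · intro i hia hib k
    have hpi : p i = 0 := hrest i hia hib
    have hzero : ∀ k, M i k = 0 := by
      intro k
      by_cases hik : i = k
      · rw [← hik, hdiag i, hpi]; simp
      · have h2 : Complex.normSq (M i k) ≤ p i * p k := psd_entry_sq hM hik
        rw [hpi, zero_mul] at h2
        exact Complex.normSq_eq_zero.mp (le_antisymm h2 (Complex.normSq_nonneg _))
    refine ⟨hzero k, ?_⟩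
    have : M k i = star (M i k) := (hM.isHermitian.apply k i).symm
    rw [this, hzero k]; simp

/-- Self-testing of the Bell state: if a density matrix on `ℂ^d ⊗ ℂ^d` (here `d = n + 2 ≥ 2`)
has `⟨φ⁰φ⁰|ρ|φ¹φ¹⟩ = 1/2` in some orthonormal basis `{φ^a}`, then
`ρ = |ψ⟩⟨ψ|` with `|ψ⟩ = (|φ⁰φ⁰⟩ + |φ¹φ¹⟩)/√2`. -/
theorem slhs_stmt11 {n : ℕ}
    (φ : Fin (n + 2) → (Fin (n + 2) → ℂ))
    (hortho : ∀ a b, star (φ a) ⬝ᵥ φ b = if a = b then (1 : ℂ) else 0)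
    (ρ : Matrix (Fin (n + 2) × Fin (n + 2)) (Fin (n + 2) × Fin (n + 2)) ℂ)
    (hρ : ρ.PosSemidef) (hτ : ρ.trace = 1)
    (h : star (fun x : Fin (n + 2) × Fin (n + 2) => φ 0 x.1 * φ 0 x.2) ⬝ᵥ
        ρ *ᵥ (fun x : Fin (n + 2) × Fin (n + 2) => φ 1 x.1 * φ 1 x.2) = 1 / 2) :
    ρ = Matrix.vecMulVec
      (fun x : Fin (n + 2) × Fin (n + 2) =>
        (φ 0 x.1 * φ 0 x.2 + φ 1 x.1 * φ 1 x.2) / Real.sqrt 2)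
      (star fun x : Fin (n + 2) × Fin (n + 2) =>
        (φ 0 x.1 * φ 0 x.2 + φ 1 x.1 * φ 1 x.2) / Real.sqrt 2) := by
  classical
  have key1 : ∀ a b : Fin (n + 2), ∑ j, starRingEnd ℂ (φ a j) * φ b j
      = if a = b then (1:ℂ) else 0 := by
    intro a b
    simpa [dotProduct, Pi.star_apply, RCLike.star_def] using hortho a b
  have key1' : ∀ a b : Fin (n + 2), ∑ j, φ a j * starRingEnd ℂ (φ b j)
      = if b = a then (1:ℂ) else 0 := by
    intro a b
    rw [← key1 b a]
    exact Finset.sum_congr rfl fun j _ => mul_comm _ _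
  set U : Matrix (Fin (n + 2) × Fin (n + 2)) (Fin (n + 2) × Fin (n + 2)) ℂ :=
    Matrix.of (fun i j => φ i.1 j.1 * φ i.2 j.2) with hU
  have hUU : U * Uᴴ = 1 := by
    ext i k
    rw [Matrix.mul_apply]
    have hterm : ∀ j, U i j * Uᴴ j k =
        (φ i.1 j.1 * starRingEnd ℂ (φ k.1 j.1)) *
        (φ i.2 j.2 * starRingEnd ℂ (φ k.2 j.2)) := by
      intro j
      simp only [hU, Matrix.of_apply, Matrix.conjTranspose_apply, RCLike.star_def,
        _root_.map_mul]
      ring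
    simp_rw [hterm]
    rw [Fintype.sum_prod_type]
    dsimp only
    rw [← Finset.sum_mul_sum, key1', key1', Matrix.one_apply]
    by_cases h1 : i = k
    · subst h1; simp
    · rw [if_neg h1]
      rw [Prod.ext_iff, not_and_or] at h1
      rcases h1 with h1 | h1
      · rw [if_neg (Ne.symm h1), zero_mul]
      · rw [if_neg (Ne.symm h1), mul_zero]
  have hUUc : Uᴴ * U = 1 := mul_eq_one_comm.mp hUU
  set A := Uᵀ with hA
  have hAH : Aᴴ = Uᴴᵀ := by ext i j; rfl
  have hAAH : A * Aᴴ = 1 := by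
    rw [hA, hAH, ← Matrix.transpose_mul, hUUc, Matrix.transpose_one]
  set σ := Aᴴ * ρ * A with hσ
  have hσpsd : σ.PosSemidef := hρ.conjTranspose_mul_mul_same A
  have hσtr : σ.trace = 1 := by
    rw [hσ, Matrix.trace_mul_cycle, hAAH, Matrix.one_mul, hτ]
  set a : Fin (n + 2) × Fin (n + 2) := (0, 0) with ha
  set b : Fin (n + 2) × Fin (n + 2) := (1, 1) with hb
  have hab : a ≠ b := by
    simp [ha, hb, Prod.ext_iff, Fin.ext_iff]
  have hσab : σ a b = 1/2 := by
    rw [← h, hσ, Matrix.mul_assoc]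
    rw [Matrix.mul_apply]
    apply Finset.sum_congr rfl
    intro j _
    rw [Matrix.mul_apply]
    rfl
  obtain ⟨haa, hbb, hba, hvanish⟩ := core hσpsd hσtr hab hσab
  have hρeq : A * σ * Aᴴ = ρ := by
    rw [hσ]
    calc A * (Aᴴ * ρ * A) * Aᴴ = (A * Aᴴ) * ρ * (A * Aᴴ) := by noncomm_ring
      _ = ρ := by rw [hAAH, Matrix.one_mul, Matrix.mul_one]
  have hsum2 : ∀ (f : Fin (n + 2) × Fin (n + 2) → ℂ), (∀ i, i ≠ a → i ≠ b → f i = 0) →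
      ∑ i, f i = f a + f b := by
    intro f hf
    rw [← Finset.sum_pair hab]
    refine (Finset.sum_subset (Finset.subset_univ _) ?_).symm
    intro x _ hx
    simp only [Finset.mem_insert, Finset.mem_singleton, not_or] at hx
    exact hf x hx.1 hx.2
  rw [← hρeq]
  ext j l
  rw [Matrix.mul_assoc, Matrix.mul_apply]
  have hAH' : ∀ k, (Aᴴ) k l = starRingEnd ℂ (U k l) := fun k => rfl
  have hinner : ∀ i, (σ * Aᴴ) i l =
      σ i a * starRingEnd ℂ (U a l) + σ i b * starRingEnd ℂ (U b l) := by
    intro i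
    rw [Matrix.mul_apply]
    have hz : ∀ k, k ≠ a → k ≠ b → σ i k * Aᴴ k l = 0 := by
      intro k hka hkb
      rcases Decidable.em (i = a) with hia | hia
      · rcases Decidable.em (i = b) with hib | hib
        · exact absurd (hia ▸ hib : a = b) hab
        · rw [(hvanish k hka hkb i).2, zero_mul]
      · rcases Decidable.em (i = b) with hib | hib
        · rw [(hvanish k hka hkb i).2, zero_mul]
        · rw [(hvanish i hia hib k).1, zero_mul]
    rw [hsum2 (fun k => σ i k * Aᴴ k l) hz]
    beta_reduce
    rw [hAH' a, hAH' b]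
  have houter : ∀ i, i ≠ a → i ≠ b → A j i * (σ * Aᴴ) i l = 0 := by
    intro i hia hib
    rw [hinner i, (hvanish i hia hib a).1, (hvanish i hia hib b).1]
    ring
  rw [hsum2 (fun i => A j i * (σ * Aᴴ) i l) houter]
  beta_reduce
  rw [hinner a, hinner b, haa, hbb, hba, hσab]
  have hAja : A j a = U a j := rfl
  have hAjb : A j b = U b j := rfl
  rw [hAja, hAjb, Matrix.vecMulVec_apply]
  have hs2 : ((Real.sqrt 2 : ℝ) : ℂ) * ((Real.sqrt 2 : ℝ) : ℂ) = 2 := by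
    rw [← Complex.ofReal_mul, Real.mul_self_sqrt (by norm_num)]
    norm_num
  simp only [Pi.star_apply, RCLike.star_def, map_div₀, map_add, _root_.map_mul,
    Complex.conj_ofReal]
  rw [div_mul_div_comm, hs2]
  simp only [hU, ha, hb, Matrix.of_apply, _root_.map_mul]
  ring
end
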